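/- With the symmetric pair data of a simple Lie algebra g = h ⊕ m and Casimir eigenvalue c_g, the mixed structure constants satisfy Σ_α g_q^{pα} [X_α, Y_p] = (c_g/2) Y_q and Σ_α g_p^{rα} g_{αr}^q = (c_g/2) δ_p^q. -/

import Mathlib

open Finset Matrix


/-- For a symmetric pair `g = h ⊕ m` of a finite dimensional complex simple Lie
algebra with symmetric space basis `x` (indexed by `ιh ⊕ ιm`), structure constants
`A`, Killing form `η` with full inverse `ηinv` and `h`-block inverse `ηinvh`, and
adjoint Casimir eigenvalue `cg`, the mixed structure constants
`g_{αp}^q = A (inl α) (inr p) (inr q)` with raised versions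
`g_q^{pα} = ∑ ρ, ηinvh α ρ * g_{ρq}^p` satisfy
`Σ_α g_q^{pα} [X_α, Y_p] = (cg/2) Y_q` and `Σ_α g_p^{rα} g_{αr}^q = (cg/2) δ_p^q`. -/
theorem symmetric_pair_mixed_constant_identities
    {L : Type*} [LieRing L] [LieAlgebra ℂ L]
    [FiniteDimensional ℂ L] [LieAlgebra.IsSimple ℂ L]
    {ιh ιm : Type*} [Fintype ιh] [Fintype ιm]
    [DecidableEq ιh] [DecidableEq ιm]
    (x : Module.Basis (ιh ⊕ ιm) ℂ L)
    (A : (ιh ⊕ ιm) → (ιh ⊕ ιm) → (ιh ⊕ ιm) → ℂ)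
    (hA : ∀ a b, ⁅x a, x b⁆ = ∑ c, A a b c • x c)
    (hhh : ∀ α β p, A (.inl α) (.inl β) (.inr p) = 0)
    (hhm : ∀ α p β, A (.inl α) (.inr p) (.inl β) = 0)
    (hmm : ∀ p q r, A (.inr p) (.inr q) (.inr r) = 0)
    (η : (ιh ⊕ ιm) → (ιh ⊕ ιm) → ℂ)
    (hη : ∀ a b, η a b = ∑ c, ∑ d, A a c d * A b d c)
    (ηinv : (ιh ⊕ ιm) → (ιh ⊕ ιm) → ℂ)
    (hηinv : ∀ a c, (∑ b, η a b * ηinv b c) = if a = c then 1 else 0)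
    (ηinvh : ιh → ιh → ℂ)
    (hηinvh : ∀ α β, (∑ γ, η (.inl α) (.inl γ) * ηinvh γ β) = if α = β then 1 else 0)
    (cg : ℂ)
    (hcg : ∀ c d, (∑ a, ∑ b, ∑ e, ηinv a b * A a c e * A b e d)
        = cg * (if c = d then 1 else 0)) :
    (∀ q, (∑ α, ∑ p, (∑ ρ, ηinvh α ρ * A (.inl ρ) (.inr q) (.inr p)) •
          ⁅x (.inl α), x (.inr p)⁆)
        = (cg / 2) • x (.inr q)) ∧
    (∀ p q, (∑ α, ∑ r, (∑ ρ, ηinvh α ρ * A (.inl ρ) (.inr p) (.inr r))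
          * A (.inl α) (.inr r) (.inr q))
        = (cg / 2) * (if p = q then 1 else 0)) := by
  classical
  -- bracket-sum helpers
  have lie_sum' : ∀ (z : L) (f : (ιh ⊕ ιm) → L), ⁅z, ∑ c, f c⁆ = ∑ c, ⁅z, f c⁆ := by
    intro z f
    exact map_sum (LieModule.toEnd ℂ L L z) f Finset.univ
  have sum_lie' : ∀ (f : (ιh ⊕ ιm) → L) (z : L), ⁅∑ c, f c, z⁆ = ∑ c, ⁅f c, z⁆ := by
    intro f z
    rw [← lie_skew _ z, lie_sum', ← Finset.sum_neg_distrib]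
    exact Finset.sum_congr rfl fun c _ => lie_skew _ _
  -- coefficient extraction
  have hrepr : ∀ f g : (ιh ⊕ ιm) → ℂ,
      (∑ c, f c • x c) = (∑ c, g c • x c) → ∀ c, f c = g c := by
    intro f g h c
    have h0 : ∑ e, (f e - g e) • x e = 0 := by
      simp only [sub_smul, Finset.sum_sub_distrib, h, sub_self]
    have h1 := Fintype.linearIndependent_iff.mp x.linearIndependent
      (fun e => f e - g e) h0 c
    exact sub_eq_zero.mp h1
  -- antisymmetry in first two indices
  have hanti : ∀ a b c, A b a c = - A a b c := by
    intro a b c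
    have h1 : (∑ e, A b a e • x e) = ∑ e, (- A a b e) • x e := by
      rw [← hA, ← lie_skew (x b) (x a), hA, ← Finset.sum_neg_distrib]
      exact Finset.sum_congr rfl fun e _ => (neg_smul _ _).symm
    exact hrepr _ _ h1 c
  -- Jacobi identity on structure constants
  have hJ : ∀ a b c d, (∑ e, A a b e * A e c d)
      = (∑ e, A b c e * A a e d) - (∑ e, A a c e * A b e d) := by
    intro a b c d
    have e1 : ∀ u v w : ιh ⊕ ιm, ⁅x u, ⁅x v, x w⁆⁆
        = ∑ d', (∑ e, A v w e * A u e d') • x d' := by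
      intro u v w
      rw [hA v w, lie_sum']
      have : ∀ e, ⁅x u, A v w e • x e⁆ = ∑ d', (A v w e * A u e d') • x d' := by
        intro e
        rw [lie_smul, hA]
        rw [Finset.smul_sum]
        exact Finset.sum_congr rfl fun d' _ => by rw [smul_smul]
      rw [Finset.sum_congr rfl fun e _ => this e, Finset.sum_comm]
      exact Finset.sum_congr rfl fun d' _ => by rw [Finset.sum_smul]
    have e0 : ⁅⁅x a, x b⁆, x c⁆ = ∑ d', (∑ e, A a b e * A e c d') • x d' := by
      rw [hA a b, sum_lie']
      have : ∀ e, ⁅A a b e • x e, x c⁆ = ∑ d', (A a b e * A e c d') • x d' := by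
        intro e
        rw [smul_lie, hA]
        rw [Finset.smul_sum]
        exact Finset.sum_congr rfl fun d' _ => by rw [smul_smul]
      rw [Finset.sum_congr rfl fun e _ => this e, Finset.sum_comm]
      exact Finset.sum_congr rfl fun d' _ => by rw [Finset.sum_smul]
    have e2 : ⁅⁅x a, x b⁆, x c⁆ = ⁅x a, ⁅x b, x c⁆⁆ - ⁅x b, ⁅x a, x c⁆⁆ := lie_lie _ _ _
    rw [e0, e1 a b c, e1 b a c] at e2
    have e3 : (∑ d', (∑ e, A a b e * A e c d') • x d')
        = ∑ d', ((∑ e, A b c e * A a e d') - (∑ e, A a c e * A b e d')) • x d' := by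
      rw [e2, ← Finset.sum_sub_distrib]
      exact Finset.sum_congr rfl fun d' _ => by rw [sub_smul]
    exact hrepr _ _ e3 d

  -- adjoint matrices
  set Ma : (ιh ⊕ ιm) → Matrix (ιh ⊕ ιm) (ιh ⊕ ιm) ℂ :=
    fun a => Matrix.of fun d c => A a c d with hMa
  have hcomm : ∀ a b, Ma a * Ma b - Ma b * Ma a = ∑ e, A a b e • Ma e := by
    intro a b
    ext d c
    simp only [Matrix.sub_apply, Matrix.mul_apply, Matrix.sum_apply, Matrix.smul_apply,
      hMa, Matrix.of_apply, smul_eq_mul]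
    rw [hJ a b c d]
    congr 1 <;> exact Finset.sum_congr rfl fun e _ => mul_comm _ _
  have hηtr : ∀ a b, η a b = (Ma a * Ma b).trace := by
    intro a b
    rw [hη]
    simp only [Matrix.trace, Matrix.diag_apply, Matrix.mul_apply, hMa, Matrix.of_apply]
    exact Finset.sum_comm
  -- lowered structure constants
  set C : (ιh ⊕ ιm) → (ιh ⊕ ιm) → (ιh ⊕ ιm) → ℂ :=
    fun a b c => ∑ e, A a b e * η e c with hCdef
  have hCtr : ∀ a b c, C a b c
      = (Ma a * Ma b * Ma c).trace - (Ma b * Ma a * Ma c).trace := by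
    intro a b c
    have h1 : (Ma a * Ma b - Ma b * Ma a) * Ma c = ∑ e, A a b e • (Ma e * Ma c) := by
      rw [hcomm, Finset.sum_mul]
      exact Finset.sum_congr rfl fun e _ => Matrix.smul_mul _ _ _
    have h2 := congrArg Matrix.trace h1
    rw [Matrix.sub_mul, Matrix.trace_sub, Matrix.trace_sum] at h2
    simp only [Matrix.trace_smul, smul_eq_mul] at h2
    calc C a b c = ∑ e, A a b e * (Ma e * Ma c).trace :=
          Finset.sum_congr rfl fun e _ => by rw [hηtr]
      _ = _ := h2.symm
  have hCcyc : ∀ a b c, C a b c = C b c a := by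
    intro a b c
    rw [hCtr, hCtr]
    rw [Matrix.trace_mul_cycle (Ma b) (Ma c) (Ma a),
      Matrix.trace_mul_cycle (Ma c) (Ma b) (Ma a),
      Matrix.trace_mul_cycle (Ma a) (Ma c) (Ma b)]
  have hCswap : ∀ a b c, C b a c = - C a b c := by
    intro a b c
    simp only [hCdef]
    rw [← Finset.sum_neg_distrib]
    exact Finset.sum_congr rfl fun e _ => by rw [hanti a b e, neg_mul]
  have hCsign : ∀ (s : ιm) (p : ιm) (δ : ιh),
      C (Sum.inr s) (Sum.inr p) (Sum.inl δ) = - C (Sum.inl δ) (Sum.inr p) (Sum.inr s) := by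
    intro s p δ
    rw [hCcyc, hCswap]
  -- symmetry and block structure of the Killing form
  have hηsymm : ∀ a b, η a b = η b a := by
    intro a b
    rw [hη a b, hη b a, Finset.sum_comm]
    exact Finset.sum_congr rfl fun d _ => Finset.sum_congr rfl fun c _ => mul_comm _ _
  have hmh0 : ∀ (p : ιm) (α β : ιh), A (Sum.inr p) (Sum.inl α) (Sum.inl β) = 0 := by
    intro p α β
    rw [hanti, hhm, neg_zero]
  have hη_hm : ∀ α p, η (Sum.inl α) (Sum.inr p) = 0 := by
    intro α p
    rw [hη, Fintype.sum_sum_type]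
    simp [Fintype.sum_sum_type, hhh, hhm, hmm, hmh0]
  have hη_mh : ∀ p α, η (Sum.inr p) (Sum.inl α) = 0 := fun p α => by
    rw [hηsymm]; exact hη_hm α p

  -- block components of the inverse relation
  have hinv_hh : ∀ α β, (∑ γ, η (Sum.inl α) (Sum.inl γ) * ηinv (Sum.inl γ) (Sum.inl β))
      = if α = β then 1 else 0 := by
    intro α β
    have h1 := hηinv (Sum.inl α) (Sum.inl β)
    rw [Fintype.sum_sum_type] at h1
    simpa [hη_hm] using h1
  have hinv_mm : ∀ s t, (∑ u, η (Sum.inr s) (Sum.inr u) * ηinv (Sum.inr u) (Sum.inr t))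
      = if s = t then 1 else 0 := by
    intro s t
    have h1 := hηinv (Sum.inr s) (Sum.inr t)
    rw [Fintype.sum_sum_type] at h1
    simpa [hη_mh] using h1
  have hinv_hm' : ∀ α t, (∑ γ, η (Sum.inl α) (Sum.inl γ) * ηinv (Sum.inl γ) (Sum.inr t)) = 0 := by
    intro α t
    have h1 := hηinv (Sum.inl α) (Sum.inr t)
    rw [Fintype.sum_sum_type] at h1
    simpa [hη_hm] using h1
  have hinv_mh' : ∀ s β, (∑ u, η (Sum.inr s) (Sum.inr u) * ηinv (Sum.inr u) (Sum.inl β)) = 0 := by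
    intro s β
    have h1 := hηinv (Sum.inr s) (Sum.inl β)
    rw [Fintype.sum_sum_type] at h1
    simpa [hη_mh] using h1
  -- block matrices
  set Eh : Matrix ιh ιh ℂ := Matrix.of (fun α β => η (Sum.inl α) (Sum.inl β)) with hEhdef
  set Hm : Matrix ιh ιh ℂ := Matrix.of ηinvh with hHmdef
  set Qm : Matrix ιh ιh ℂ := Matrix.of (fun α β => ηinv (Sum.inl α) (Sum.inl β)) with hQmdef
  set Em : Matrix ιm ιm ℂ := Matrix.of (fun s t => η (Sum.inr s) (Sum.inr t)) with hEmdef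
  set Sm : Matrix ιm ιm ℂ := Matrix.of (fun s t => ηinv (Sum.inr s) (Sum.inr t)) with hSmdef
  have hEhH : Eh * Hm = 1 := by
    ext α β
    simp only [hEhdef, hHmdef, Matrix.mul_apply, Matrix.of_apply, Matrix.one_apply]
    exact hηinvh α β
  have hHEh : Hm * Eh = 1 := mul_eq_one_comm.mp hEhH
  have hEhQ : Eh * Qm = 1 := by
    ext α β
    simp only [hEhdef, hQmdef, Matrix.mul_apply, Matrix.of_apply, Matrix.one_apply]
    exact hinv_hh α β
  have hEmS : Em * Sm = 1 := by
    ext s t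
    simp only [hEmdef, hSmdef, Matrix.mul_apply, Matrix.of_apply, Matrix.one_apply]
    exact hinv_mm s t
  have hSEm : Sm * Em = 1 := mul_eq_one_comm.mp hEmS
  have hHQ : Hm = Qm := by
    calc Hm = Hm * (Eh * Qm) := by rw [hEhQ, mul_one]
      _ = (Hm * Eh) * Qm := (mul_assoc _ _ _).symm
      _ = Qm := by rw [hHEh, one_mul]
  have hinvh_eq : ∀ α β, ηinvh α β = ηinv (Sum.inl α) (Sum.inl β) := by
    intro α β
    have h1 := congrFun (congrFun hHQ α) β
    simpa [hHmdef, hQmdef] using h1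
  have hEhT : Eh.transpose = Eh := by
    ext α β
    simp only [Matrix.transpose_apply, hEhdef, Matrix.of_apply]
    exact (hηsymm _ _).symm
  have hHsymm : ∀ α β, ηinvh α β = ηinvh β α := by
    intro α β
    have h1 : Hm.transpose * Eh = 1 := by
      calc Hm.transpose * Eh = Hm.transpose * Eh.transpose := by rw [hEhT]
        _ = (Eh * Hm).transpose := (Matrix.transpose_mul _ _).symm
        _ = 1 := by rw [hEhH, Matrix.transpose_one]
    have h2 : Hm.transpose = Hm := by
      calc Hm.transpose = Hm.transpose * (Eh * Hm) := by rw [hEhH, mul_one]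
        _ = (Hm.transpose * Eh) * Hm := (mul_assoc _ _ _).symm
        _ = Hm := by rw [h1, one_mul]
    have h3 := congrFun (congrFun h2 α) β
    exact (by simpa [hHmdef, Matrix.transpose_apply] using h3 : ηinvh β α = ηinvh α β).symm
  have hinv_hm0 : ∀ γ p, ηinv (Sum.inl γ) (Sum.inr p) = 0 := by
    intro γ p
    set R : Matrix ιh ιm ℂ := Matrix.of (fun δ t => ηinv (Sum.inl δ) (Sum.inr t)) with hRdef
    have h1 : Eh * R = 0 := by
      ext α t
      simp only [hEhdef, hRdef, Matrix.mul_apply, Matrix.of_apply, Matrix.zero_apply]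
      exact hinv_hm' α t
    have h2 : R = 0 := by
      calc R = (Hm * Eh) * R := by rw [hHEh, Matrix.one_mul]
        _ = Hm * (Eh * R) := Matrix.mul_assoc _ _ _
        _ = 0 := by rw [h1, Matrix.mul_zero]
    have h3 := congrFun (congrFun h2 γ) p
    simpa [hRdef] using h3
  have hinv_mh0 : ∀ t β, ηinv (Sum.inr t) (Sum.inl β) = 0 := by
    intro t β
    set R : Matrix ιm ιh ℂ := Matrix.of (fun u δ => ηinv (Sum.inr u) (Sum.inl δ)) with hRdef
    have h1 : Em * R = 0 := by
      ext s δ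
      simp only [hEmdef, hRdef, Matrix.mul_apply, Matrix.of_apply, Matrix.zero_apply]
      exact hinv_mh' s δ
    have h2 : R = 0 := by
      calc R = (Sm * Em) * R := by rw [hSEm, Matrix.one_mul]
        _ = Sm * (Em * R) := Matrix.mul_assoc _ _ _
        _ = 0 := by rw [h1, Matrix.mul_zero]
    have h3 := congrFun (congrFun h2 t) β
    simpa [hRdef] using h3

  -- raising with the inverse Killing form
  have hraise_m : ∀ (ρ : ιh) (p r : ιm), A (Sum.inl ρ) (Sum.inr p) (Sum.inr r)
      = ∑ s, C (Sum.inl ρ) (Sum.inr p) (Sum.inr s) * ηinv (Sum.inr s) (Sum.inr r) := by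
    intro ρ p r
    have h1 : ∀ s : ιm, C (Sum.inl ρ) (Sum.inr p) (Sum.inr s)
        = ∑ u, A (Sum.inl ρ) (Sum.inr p) (Sum.inr u) * η (Sum.inr u) (Sum.inr s) := by
      intro s
      simp only [hCdef]
      rw [Fintype.sum_sum_type]
      simp [hhm]
    symm
    calc ∑ s, C (Sum.inl ρ) (Sum.inr p) (Sum.inr s) * ηinv (Sum.inr s) (Sum.inr r)
        = ∑ s, ∑ u, A (Sum.inl ρ) (Sum.inr p) (Sum.inr u) * η (Sum.inr u) (Sum.inr s)
            * ηinv (Sum.inr s) (Sum.inr r) := by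
          refine Finset.sum_congr rfl fun s _ => ?_
          rw [h1 s, Finset.sum_mul]
      _ = ∑ u, ∑ s, A (Sum.inl ρ) (Sum.inr p) (Sum.inr u)
            * (η (Sum.inr u) (Sum.inr s) * ηinv (Sum.inr s) (Sum.inr r)) := by
          rw [Finset.sum_comm]
          exact Finset.sum_congr rfl fun u _ => Finset.sum_congr rfl fun s _ => by ring
      _ = ∑ u, A (Sum.inl ρ) (Sum.inr p) (Sum.inr u)
            * (∑ s, η (Sum.inr u) (Sum.inr s) * ηinv (Sum.inr s) (Sum.inr r)) :=
          Finset.sum_congr rfl fun u _ => (Finset.mul_sum _ _ _).symm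
      _ = ∑ u, A (Sum.inl ρ) (Sum.inr p) (Sum.inr u) * (if u = r then 1 else 0) :=
          Finset.sum_congr rfl fun u _ => by rw [hinv_mm u r]
      _ = A (Sum.inl ρ) (Sum.inr p) (Sum.inr r) := by
          simp [mul_ite, Finset.sum_ite_eq']
  have hraise_h : ∀ (s p : ιm) (γ : ιh), A (Sum.inr s) (Sum.inr p) (Sum.inl γ)
      = ∑ δ, C (Sum.inr s) (Sum.inr p) (Sum.inl δ) * ηinvh δ γ := by
    intro s p γ
    have h1 : ∀ δ : ιh, C (Sum.inr s) (Sum.inr p) (Sum.inl δ)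
        = ∑ ε, A (Sum.inr s) (Sum.inr p) (Sum.inl ε) * η (Sum.inl ε) (Sum.inl δ) := by
      intro δ
      simp only [hCdef]
      rw [Fintype.sum_sum_type]
      simp [hmm]
    symm
    calc ∑ δ, C (Sum.inr s) (Sum.inr p) (Sum.inl δ) * ηinvh δ γ
        = ∑ δ, ∑ ε, A (Sum.inr s) (Sum.inr p) (Sum.inl ε) * η (Sum.inl ε) (Sum.inl δ)
            * ηinvh δ γ := by
          refine Finset.sum_congr rfl fun δ _ => ?_
          rw [h1 δ, Finset.sum_mul]
      _ = ∑ ε, ∑ δ, A (Sum.inr s) (Sum.inr p) (Sum.inl ε)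
            * (η (Sum.inl ε) (Sum.inl δ) * ηinvh δ γ) := by
          rw [Finset.sum_comm]
          exact Finset.sum_congr rfl fun ε _ => Finset.sum_congr rfl fun δ _ => by ring
      _ = ∑ ε, A (Sum.inr s) (Sum.inr p) (Sum.inl ε)
            * (∑ δ, η (Sum.inl ε) (Sum.inl δ) * ηinvh δ γ) :=
          Finset.sum_congr rfl fun ε _ => (Finset.mul_sum _ _ _).symm
      _ = ∑ ε, A (Sum.inr s) (Sum.inr p) (Sum.inl ε) * (if ε = γ then 1 else 0) :=
          Finset.sum_congr rfl fun ε _ => by rw [hηinvh ε γ]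
      _ = A (Sum.inr s) (Sum.inr p) (Sum.inl γ) := by
          simp [mul_ite, Finset.sum_ite_eq']

  -- main identity (second goal)
  have G2 : ∀ p q, (∑ α, ∑ r, (∑ ρ, ηinvh α ρ * A (.inl ρ) (.inr p) (.inr r))
          * A (.inl α) (.inr r) (.inr q))
        = (cg / 2) * (if p = q then 1 else 0) := by
    intro p q
    -- flattened form of the goal LHS
    set S : ℂ := ∑ α, ∑ r, ∑ ρ,
      (ηinvh α ρ * A (Sum.inl ρ) (Sum.inr p) (Sum.inr r))
        * A (Sum.inl α) (Sum.inr r) (Sum.inr q) with hSdef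
    have hSS : (∑ α, ∑ r, (∑ ρ, ηinvh α ρ * A (.inl ρ) (.inr p) (.inr r))
          * A (.inl α) (.inr r) (.inr q)) = S :=
      Finset.sum_congr rfl fun α _ => Finset.sum_congr rfl fun r _ => Finset.sum_mul _ _ _
    -- h-block Casimir part
    have hP1 : (∑ α, ∑ b, ∑ e, ηinv (Sum.inl α) b * A (Sum.inl α) (Sum.inr p) e
          * A b e (Sum.inr q))
        = ∑ α, ∑ β, ∑ r, ηinv (Sum.inl α) (Sum.inl β)
            * A (Sum.inl α) (Sum.inr p) (Sum.inr r)
            * A (Sum.inl β) (Sum.inr r) (Sum.inr q) := by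
      refine Finset.sum_congr rfl fun α _ => ?_
      rw [Fintype.sum_sum_type]
      simp only [hinv_hm0, zero_mul, Finset.sum_const_zero, add_zero]
      refine Finset.sum_congr rfl fun β _ => ?_
      rw [Fintype.sum_sum_type]
      simp [hhm]
    -- m-block Casimir part
    have hP2 : (∑ s, ∑ b, ∑ e, ηinv (Sum.inr s) b * A (Sum.inr s) (Sum.inr p) e
          * A b e (Sum.inr q))
        = ∑ s, ∑ t, ∑ γ, ηinv (Sum.inr s) (Sum.inr t)
            * A (Sum.inr s) (Sum.inr p) (Sum.inl γ)
            * A (Sum.inr t) (Sum.inl γ) (Sum.inr q) := by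
      refine Finset.sum_congr rfl fun s _ => ?_
      rw [Fintype.sum_sum_type]
      simp only [hinv_mh0, zero_mul, Finset.sum_const_zero, zero_add]
      refine Finset.sum_congr rfl fun t _ => ?_
      rw [Fintype.sum_sum_type]
      simp [hmm]
    -- S equals the h-block part
    have hSh : S = ∑ α, ∑ β, ∑ r, ηinv (Sum.inl α) (Sum.inl β)
        * A (Sum.inl α) (Sum.inr p) (Sum.inr r)
        * A (Sum.inl β) (Sum.inr r) (Sum.inr q) := by
      calc S = ∑ α, ∑ r, ∑ ρ, ηinv (Sum.inl ρ) (Sum.inl α)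
            * A (Sum.inl ρ) (Sum.inr p) (Sum.inr r)
            * A (Sum.inl α) (Sum.inr r) (Sum.inr q) := by
              rw [hSdef]
              refine Finset.sum_congr rfl fun α _ => Finset.sum_congr rfl fun r _ =>
                Finset.sum_congr rfl fun ρ _ => ?_
              rw [hHsymm α ρ, hinvh_eq ρ α]
        _ = ∑ α, ∑ ρ, ∑ r, ηinv (Sum.inl ρ) (Sum.inl α)
            * A (Sum.inl ρ) (Sum.inr p) (Sum.inr r)
            * A (Sum.inl α) (Sum.inr r) (Sum.inr q) :=
          Finset.sum_congr rfl fun α _ => Finset.sum_comm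
        _ = ∑ ρ, ∑ α, ∑ r, ηinv (Sum.inl ρ) (Sum.inl α)
            * A (Sum.inl ρ) (Sum.inr p) (Sum.inr r)
            * A (Sum.inl α) (Sum.inr r) (Sum.inr q) := Finset.sum_comm
    -- S in fully lowered form
    set u : ιh → ιh → ιm → ιm → ℂ := fun α ρ s r =>
      ηinvh α ρ * C (Sum.inl ρ) (Sum.inr p) (Sum.inr s)
        * ηinv (Sum.inr s) (Sum.inr r) * A (Sum.inl α) (Sum.inr r) (Sum.inr q) with hudef
    have hSu : S = ∑ α, ∑ r, ∑ ρ, ∑ s, u α ρ s r := by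
      rw [hSdef]
      refine Finset.sum_congr rfl fun α _ => Finset.sum_congr rfl fun r _ =>
        Finset.sum_congr rfl fun ρ _ => ?_
      rw [hraise_m ρ p r, Finset.mul_sum, Finset.sum_mul]
      refine Finset.sum_congr rfl fun s _ => ?_
      simp only [hudef]
      ring
    -- S equals the m-block part
    have hSm : S = ∑ s, ∑ t, ∑ γ, ηinv (Sum.inr s) (Sum.inr t)
        * A (Sum.inr s) (Sum.inr p) (Sum.inl γ)
        * A (Sum.inr t) (Sum.inl γ) (Sum.inr q) := by
      calc S = ∑ α, ∑ r, ∑ ρ, ∑ s, u α ρ s r := hSu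
        _ = ∑ α, ∑ r, ∑ s, ∑ ρ, u α ρ s r :=
          Finset.sum_congr rfl fun α _ => Finset.sum_congr rfl fun r _ => Finset.sum_comm
        _ = ∑ α, ∑ s, ∑ r, ∑ ρ, u α ρ s r :=
          Finset.sum_congr rfl fun α _ => Finset.sum_comm
        _ = ∑ s, ∑ α, ∑ r, ∑ ρ, u α ρ s r := Finset.sum_comm
        _ = ∑ s, ∑ r, ∑ α, ∑ ρ, u α ρ s r :=
          Finset.sum_congr rfl fun s _ => Finset.sum_comm
        _ = ∑ s, ∑ t, ∑ γ, ηinv (Sum.inr s) (Sum.inr t)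
            * A (Sum.inr s) (Sum.inr p) (Sum.inl γ)
            * A (Sum.inr t) (Sum.inl γ) (Sum.inr q) := by
              refine Finset.sum_congr rfl fun s _ => Finset.sum_congr rfl fun t _ =>
                Finset.sum_congr rfl fun γ _ => ?_
              rw [hraise_h s p γ, hanti (Sum.inl γ) (Sum.inr t) (Sum.inr q),
                Finset.mul_sum, Finset.sum_mul]
              refine Finset.sum_congr rfl fun δ _ => ?_
              simp only [hudef]
              rw [hCsign s p δ, hHsymm δ γ]
              ring
    -- combine with the Casimir eigenvalue equation
    have hsplit := hcg (Sum.inr p) (Sum.inr q)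
    rw [Fintype.sum_sum_type] at hsplit
    rw [hP1, hP2, ← hSh, ← hSm] at hsplit
    simp only [Sum.inr.injEq] at hsplit
    rw [hSS]
    linear_combination hsplit / 2
  refine ⟨?_, G2⟩
  intro q
  calc (∑ α, ∑ p, (∑ ρ, ηinvh α ρ * A (.inl ρ) (.inr q) (.inr p)) •
          ⁅x (.inl α), x (.inr p)⁆)
      = ∑ α, ∑ p, ∑ c, ((∑ ρ, ηinvh α ρ * A (Sum.inl ρ) (Sum.inr q) (Sum.inr p))
          * A (Sum.inl α) (Sum.inr p) c) • x c := by
        refine Finset.sum_congr rfl fun α _ => Finset.sum_congr rfl fun p _ => ?_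
        rw [hA, Finset.smul_sum]
        exact Finset.sum_congr rfl fun c _ => smul_smul _ _ _
    _ = ∑ α, ∑ c, ∑ p, ((∑ ρ, ηinvh α ρ * A (Sum.inl ρ) (Sum.inr q) (Sum.inr p))
          * A (Sum.inl α) (Sum.inr p) c) • x c :=
        Finset.sum_congr rfl fun α _ => Finset.sum_comm
    _ = ∑ c, ∑ α, ∑ p, ((∑ ρ, ηinvh α ρ * A (Sum.inl ρ) (Sum.inr q) (Sum.inr p))
          * A (Sum.inl α) (Sum.inr p) c) • x c := Finset.sum_comm
    _ = ∑ c, (∑ α, ∑ p, (∑ ρ, ηinvh α ρ * A (Sum.inl ρ) (Sum.inr q) (Sum.inr p))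
          * A (Sum.inl α) (Sum.inr p) c) • x c := by
        refine Finset.sum_congr rfl fun c _ => ?_
        symm
        rw [Finset.sum_smul]
        exact Finset.sum_congr rfl fun α _ => Finset.sum_smul
    _ = (∑ β, (∑ α, ∑ p, (∑ ρ, ηinvh α ρ * A (Sum.inl ρ) (Sum.inr q) (Sum.inr p))
            * A (Sum.inl α) (Sum.inr p) (Sum.inl β)) • x (Sum.inl β))
        + ∑ r, (∑ α, ∑ p, (∑ ρ, ηinvh α ρ * A (Sum.inl ρ) (Sum.inr q) (Sum.inr p))
            * A (Sum.inl α) (Sum.inr p) (Sum.inr r)) • x (Sum.inr r) :=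
        Fintype.sum_sum_type _
    _ = (cg / 2) • x (Sum.inr q) := by
        have h1 : ∀ β : ιh, (∑ α, ∑ p,
            (∑ ρ, ηinvh α ρ * A (Sum.inl ρ) (Sum.inr q) (Sum.inr p))
              * A (Sum.inl α) (Sum.inr p) (Sum.inl β)) = 0 := by
          intro β
          simp [hhm]
        have h2 : ∀ r : ιm, (∑ α, ∑ p,
            (∑ ρ, ηinvh α ρ * A (Sum.inl ρ) (Sum.inr q) (Sum.inr p))
              * A (Sum.inl α) (Sum.inr p) (Sum.inr r))
            = cg / 2 * (if q = r then 1 else 0) := fun r => G2 q r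
        have h1' : (∑ β, (∑ α, ∑ p,
            (∑ ρ, ηinvh α ρ * A (Sum.inl ρ) (Sum.inr q) (Sum.inr p))
              * A (Sum.inl α) (Sum.inr p) (Sum.inl β)) • x (Sum.inl β)) = 0 := by
          refine Finset.sum_eq_zero fun β _ => ?_
          rw [h1 β, zero_smul]
        have h2' : (∑ r, (∑ α, ∑ p,
            (∑ ρ, ηinvh α ρ * A (Sum.inl ρ) (Sum.inr q) (Sum.inr p))
              * A (Sum.inl α) (Sum.inr p) (Sum.inr r)) • x (Sum.inr r))
            = ∑ r, (cg / 2 * (if q = r then 1 else 0)) • x (Sum.inr r) :=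
          Finset.sum_congr rfl fun r _ => by rw [h2 r]
        rw [h1', zero_add, h2']
        simp [mul_ite, ite_smul, Finset.sum_ite_eq]
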